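/- Let p, q be positive integers with q < p, r = p/q, and c ∈ ℂ∖{0}. If the polynomial R(ζ) = c·ζ^p − r·ζ^q + (r−1) has a root ζ with |ζ^q| such that ζ^q is real and ζ^q = μ > 1, then R has another root ξ with ξ^q real, 0 < ξ^q < 1, and ζ^q · ξ^q > 1. -/

import Mathlib

open Real Set

lemma corePos (m n : ℕ) (hn : 0 < n) (hnm : n < m) {t : ℝ} (ht : 1 < t) :
    0 < (n : ℝ) * t ^ m - (m : ℝ) * t ^ n + ((m : ℝ) - (n : ℝ)) := by
  set f : ℝ → ℝ := fun x => (n : ℝ) * x ^ m - (m : ℝ) * x ^ n + ((m : ℝ) - (n : ℝ)) with hf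
  have hderiv : ∀ x : ℝ, HasDerivAt f
      ((n : ℝ) * ((m : ℝ) * x ^ (m - 1)) - (m : ℝ) * ((n : ℝ) * x ^ (n - 1))) x := fun x =>
    (((hasDerivAt_pow m x).const_mul (n : ℝ)).sub ((hasDerivAt_pow n x).const_mul (m : ℝ))).add_const _
  have hmono : StrictMonoOn f (Ici 1) := by
    apply strictMonoOn_of_deriv_pos (convex_Ici 1)
    · exact Continuous.continuousOn (by fun_prop)
    · intro x hx
      rw [interior_Ici] at hx
      rw [(hderiv x).deriv]
      have h1 : (1 : ℝ) < x := hx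
      have h2 : x ^ (n - 1) < x ^ (m - 1) := pow_lt_pow_right₀ h1 (by omega)
      have h3 : (0 : ℝ) < n := by exact_mod_cast hn
      have h4 : (0 : ℝ) < m := by exact_mod_cast hn.trans hnm
      nlinarith [mul_pos (mul_pos h3 h4) (sub_pos.mpr h2)]
  have h0 : f 1 = 0 := by simp [hf]
  have := hmono self_mem_Ici (mem_Ici.mpr ht.le) ht
  rw [h0] at this
  exact this

lemma Hpos (q d : ℕ) (hq : 0 < q) (hd : 0 < d) {t : ℝ} (ht : 1 < t) :
    0 < (d : ℝ) * t ^ (2*q+2*d) - ((q : ℝ) + d) * t ^ (q+2*d) + ((q : ℝ) + d) * t ^ q - d := by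
  set f : ℝ → ℝ := fun x =>
    (d : ℝ) * x ^ (2*q+2*d) - ((q : ℝ) + d) * x ^ (q+2*d) + ((q : ℝ) + d) * x ^ q - d with hf
  have hderiv : ∀ x : ℝ, HasDerivAt f
      ((d : ℝ) * ((2*q+2*d : ℕ) * x ^ (2*q+2*d - 1))
        - ((q : ℝ) + d) * ((q+2*d : ℕ) * x ^ (q+2*d - 1))
        + ((q : ℝ) + d) * ((q : ℕ) * x ^ (q - 1))) x := fun x =>
    ((((hasDerivAt_pow (2*q+2*d) x).const_mul ((d : ℝ))).sub
      ((hasDerivAt_pow (q+2*d) x).const_mul ((q : ℝ) + d))).add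
      ((hasDerivAt_pow q x).const_mul ((q : ℝ) + d))).sub_const _
  have hmono : StrictMonoOn f (Ici 1) := by
    apply strictMonoOn_of_deriv_pos (convex_Ici 1)
    · exact Continuous.continuousOn (by fun_prop)
    · intro x hx
      rw [interior_Ici] at hx
      rw [(hderiv x).deriv]
      have h1 : (1 : ℝ) < x := hx
      have hK := corePos (q+2*d) (2*d) (by omega) (by omega) h1
      have hy : (0 : ℝ) < x ^ (q - 1) := pow_pos (by linarith) _
      have he1 : 2*q+2*d - 1 = (q - 1) + (q + 2*d) := by omega
      have he2 : q+2*d - 1 = (q - 1) + 2*d := by omega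
      have key : (d : ℝ) * ((2*q+2*d : ℕ) * x ^ (2*q+2*d - 1))
          - ((q : ℝ) + d) * ((q+2*d : ℕ) * x ^ (q+2*d - 1))
          + ((q : ℝ) + d) * ((q : ℕ) * x ^ (q - 1))
          = ((q : ℝ) + d) * (x ^ (q-1) *
            ((2*d : ℕ) * x ^ (q+2*d) - ((q+2*d : ℕ) : ℝ) * x ^ (2*d) + (((q+2*d : ℕ) : ℝ) - ((2*d : ℕ) : ℝ)))) := by
        rw [he1, he2]
        push_cast
        ring
      rw [key]
      have : (0:ℝ) < (q : ℝ) + d := by positivity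
      exact mul_pos this (mul_pos hy hK)
  have h0 : f 1 = 0 := by simp [hf]
  have := hmono self_mem_Ici (mem_Ici.mpr ht.le) ht
  rw [h0] at this
  exact this


/-- If `R(ζ) = c·ζ^p − r·ζ^q + (r−1)` (`r = p/q`, `c ≠ 0`) has a root `ζ` whose
`q`-th power is a real number `μ > 1`, then `R` has another root `ξ` whose `q`-th power is a
real number in `(0,1)` whose product with `μ` exceeds `1`. -/
theorem root_with_big_power_gives_companion (p q : ℕ) (hq : 0 < q) (hpq : q < p)
    (c : ℂ) (hc : c ≠ 0) (ζ : ℂ) (μ : ℝ)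
    (hroot : c * ζ ^ p - ((p : ℂ) / q) * ζ ^ q + ((p : ℂ) / q - 1) = 0)
    (hζq : ζ ^ q = (μ : ℂ)) (hμ : 1 < μ) :
    ∃ ξ : ℂ, c * ξ ^ p - ((p : ℂ) / q) * ξ ^ q + ((p : ℂ) / q - 1) = 0 ∧
      ∃ ν : ℝ, ξ ^ q = (ν : ℂ) ∧ 0 < ν ∧ ν < 1 ∧ 1 < μ * ν := by
  have hμ0 : (0:ℝ) < μ := by linarith
  have hq0 : (0:ℝ) < (q:ℝ) := by exact_mod_cast hq
  set r : ℝ := (p:ℝ) / (q:ℝ) with hr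
  have hrq : r * q = p := by rw [hr]; exact div_mul_cancel₀ _ hq0.ne'
  have hr1 : 1 < r := by
    rw [hr, lt_div_iff₀ hq0]
    simpa using (by exact_mod_cast hpq : (q:ℝ) < (p:ℝ))
  have hRr : ((p : ℂ) / q) = ((r:ℝ) : ℂ) := by push_cast [hr]; ring
  -- real q-th root of μ
  set t : ℝ := μ ^ ((q:ℝ)⁻¹) with htdef
  have ht0 : 0 < t := rpow_pos_of_pos hμ0 _
  have htq : t ^ q = μ := Real.rpow_inv_natCast_pow hμ0.le hq.ne' 
  have ht1 : 1 < t := by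
    rw [htdef, Real.one_lt_rpow_iff_of_pos hμ0]
    exact Or.inl ⟨hμ, by positivity⟩
  have htC : ((t:ℂ)) ^ q = (μ : ℂ) := by
    rw [← htq]; push_cast; ring
  have htC0 : (t : ℂ) ≠ 0 := by exact_mod_cast ht0.ne'
  set ω : ℂ := ζ / (t : ℂ) with hω
  have hωq : ω ^ q = 1 := by
    rw [hω, div_pow, hζq, htC, div_self]
    exact_mod_cast hμ0.ne'
  have hζt : ζ = (t:ℂ) * ω := by
    rw [hω]; field_simp
  -- the rescaled constant A
  set A : ℝ := (r * μ - r + 1) / t ^ p with hA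
  have hAc : c * ω ^ p = ((A : ℝ) : ℂ) := by
    have h1 : c * ζ ^ p = ((r:ℝ):ℂ) * μ - (((r:ℝ):ℂ) - 1) := by
      rw [hRr, hζq] at hroot
      linear_combination hroot
    rw [hζt, mul_pow] at h1
    have htp : ((t:ℂ)) ^ p ≠ 0 := pow_ne_zero _ htC0
    rw [hA]
    push_cast
    field_simp at h1 ⊢
    linear_combination h1
  have hA0 : 0 < A := by
    apply div_pos _ (pow_pos ht0 p)
    nlinarith
  have hA1 : A < 1 := by
    rw [hA, div_lt_one (pow_pos ht0 p)]
    have hG := corePos p q hq hpq ht1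
    rw [← htq]
    nlinarith [hG, hrq, hq0]
  -- the real polynomial f
  set f : ℝ → ℝ := fun x => A * x ^ p - r * x ^ q + (r - 1) with hfdef
  have hft : f t = 0 := by
    simp only [hfdef]
    rw [hA, htq, div_mul_cancel₀ _ (pow_pos ht0 p).ne']
    ring
  have hf1 : f 1 < 0 := by
    simp only [hfdef, one_pow, mul_one]
    linarith
  -- positivity at t⁻¹
  obtain ⟨d, hd0, rfl⟩ : ∃ d, 0 < d ∧ p = q + d := ⟨p - q, by omega, by omega⟩
  have hfinv : 0 < f t⁻¹ := by
    have hH := Hpos q d hq hd0 ht1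
    have hAt : A * t ^ (q+d) = r * t ^ q - (r - 1) := by
      have := hft
      simp only [hfdef] at this
      linarith
    have hfval : f t⁻¹ = ((d:ℝ) * t ^ (2*q+2*d) - ((q:ℝ) + d) * t ^ (q+2*d)
        + ((q:ℝ) + d) * t ^ q - d) / ((q:ℝ) * t ^ (2*q+2*d)) := by
      simp only [hfdef]
      rw [eq_div_iff (by positivity)]
      have hqd : r * q = (q:ℝ) + d := by rw [hrq]; push_cast; ring
      have hs : t⁻¹ * t = 1 := inv_mul_cancel₀ ht0.ne'
      have e1 : t⁻¹ ^ (q+d) * t ^ (2*q+2*d) = t ^ (q+d) := by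
        rw [show 2*q+2*d = (q+d)+(q+d) by ring, pow_add t, ← mul_assoc, ← mul_pow, hs, one_pow, one_mul]
      have e2 : t⁻¹ ^ q * t ^ (2*q+2*d) = t ^ (q+2*d) := by
        rw [show 2*q+2*d = q+(q+2*d) by ring, pow_add t, ← mul_assoc, ← mul_pow, hs, one_pow, one_mul]
      linear_combination ((q:ℝ) * A) * e1 - ((q:ℝ) * r) * e2 + (q:ℝ) * hAt
        + (t ^ q - 1 - t ^ (q+2*d) + t ^ (2*q+2*d)) * hqd
    rw [hfval]
    positivity
  -- IVT
  have hti : t⁻¹ < 1 := inv_lt_one_of_one_lt₀ ht1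
  have hti0 : 0 < t⁻¹ := by positivity
  have hcont : ContinuousOn f (Icc t⁻¹ 1) := Continuous.continuousOn (by fun_prop)
  obtain ⟨x, hxmem, hfx⟩ := intermediate_value_Icc' hti.le hcont ⟨hf1.le, hfinv.le⟩
  have hxl : t⁻¹ < x := lt_of_le_of_ne hxmem.1 (by rintro rfl; linarith [hfx ▸ hfinv])
  have hxr : x < 1 := lt_of_le_of_ne hxmem.2 (by rintro rfl; linarith [hfx ▸ hf1])
  have hx0 : 0 < x := lt_trans hti0 hxl
  refine ⟨(x:ℂ) * ω, ?_, x ^ q, ?_, pow_pos hx0 q, pow_lt_one₀ hx0.le hxr hq.ne', ?_⟩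
  · have hfx' : A * x ^ (q+d) - r * x ^ q + (r - 1) = 0 := by
      simpa [hfdef] using hfx
    rw [hRr, mul_pow, mul_pow, hωq, mul_one]
    have h1 : c * ((x:ℂ) ^ (q+d) * ω ^ (q+d)) = ((A : ℝ) : ℂ) * (x:ℂ) ^ (q+d) := by
      rw [show c * ((x:ℂ)^(q+d) * ω^(q+d)) = (x:ℂ)^(q+d) * (c * ω^(q+d)) by ring, hAc]
      ring
    rw [h1]
    exact_mod_cast hfx'
  · rw [mul_pow, hωq, mul_one]; push_cast; ring
  · have htx : 1 < t * x := by
      have := (inv_lt_iff_one_lt_mul₀ ht0).mp hxl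
      linarith [mul_comm x t ▸ this]
    calc (1:ℝ) < (t * x) ^ q := one_lt_pow₀ htx hq.ne'
    _ = μ * x ^ q := by rw [mul_pow, htq]
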